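/- Smoothing inequality: let μ, ν, K be probability measures on ℝ^k with K({x : |x| < ε}) = α > 1/2. Then for every bounded measurable f: ℝ^k → ℝ, |∫ f d(μ − ν)| ≤ (2α − 1)^{-1} [γ*(f; ε) + ω*_f(2ε; ν)], where f^+_ε(x) = sup{f(y): |y−x|<ε}, f^-_ε(x) = inf{f(y): |y−x|<ε}, γ(f;ε) = max(|∫ f^+_ε d((μ−ν)⋆K)|, |∫ f^-_ε d((μ−ν)⋆K)|), γ*(f;ε) = sup_y γ(f(·+y); ε), ω_f(x;ε) = sup{|f(y)−f(x)|: |y−x|<ε}, ω_f(ε;ν) = ∫ ω_f(x;ε) dν(x), and ω*_f(2ε;ν) = sup_y ω_{f(·+y)}(2ε; ν). -/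

import Mathlib

open MeasureTheory

noncomputable section

/-- `f⁺_ε(x) = sup {f(y) : |y - x| < ε}`. -/
def fPlus {k : ℕ} (f : EuclideanSpace ℝ (Fin k) → ℝ) (ε : ℝ)
    (x : EuclideanSpace ℝ (Fin k)) : ℝ :=
  sSup (f '' Metric.ball x ε)

/-- `f⁻_ε(x) = inf {f(y) : |y - x| < ε}`. -/
def fMinus {k : ℕ} (f : EuclideanSpace ℝ (Fin k) → ℝ) (ε : ℝ)
    (x : EuclideanSpace ℝ (Fin k)) : ℝ :=
  sInf (f '' Metric.ball x ε)

/-- `∫ g d(μ ⋆ K)`, the integral against the convolution `μ ⋆ K`. -/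
def convInt {k : ℕ} (g : EuclideanSpace ℝ (Fin k) → ℝ)
    (μ K : Measure (EuclideanSpace ℝ (Fin k))) : ℝ :=
  ∫ p, g (p.1 + p.2) ∂(μ.prod K)

/-- `γ(f; ε) = max(|∫ f⁺_ε d((μ−ν)⋆K)|, |∫ f⁻_ε d((μ−ν)⋆K)|)`. -/
def gammaFn {k : ℕ} (f : EuclideanSpace ℝ (Fin k) → ℝ) (ε : ℝ)
    (μ ν K : Measure (EuclideanSpace ℝ (Fin k))) : ℝ :=
  max |convInt (fPlus f ε) μ K - convInt (fPlus f ε) ν K|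
    |convInt (fMinus f ε) μ K - convInt (fMinus f ε) ν K|

/-- `γ*(f; ε) = sup_y γ(f(·+y); ε)`. -/
def gammaStar {k : ℕ} (f : EuclideanSpace ℝ (Fin k) → ℝ) (ε : ℝ)
    (μ ν K : Measure (EuclideanSpace ℝ (Fin k))) : ℝ :=
  ⨆ y : EuclideanSpace ℝ (Fin k), gammaFn (fun x => f (x + y)) ε μ ν K

/-- `ω_f(x; ε) = sup {|f(y) − f(x)| : |y − x| < ε}`. -/
def omegaFn {k : ℕ} (f : EuclideanSpace ℝ (Fin k) → ℝ) (ε : ℝ)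
    (x : EuclideanSpace ℝ (Fin k)) : ℝ :=
  sSup ((fun y => |f y - f x|) '' Metric.ball x ε)

/-- `ω_f(ε; ν) = ∫ ω_f(x; ε) dν(x)`. -/
def omegaInt {k : ℕ} (f : EuclideanSpace ℝ (Fin k) → ℝ) (ε : ℝ)
    (ν : Measure (EuclideanSpace ℝ (Fin k))) : ℝ :=
  ∫ x, omegaFn f ε x ∂ν

/-- `ω*_f(ε; ν) = sup_y ω_{f(·+y)}(ε; ν)`. -/
def omegaStar {k : ℕ} (f : EuclideanSpace ℝ (Fin k) → ℝ) (ε : ℝ)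
    (ν : Measure (EuclideanSpace ℝ (Fin k))) : ℝ :=
  ⨆ y : EuclideanSpace ℝ (Fin k), omegaInt (fun x => f (x + y)) ε ν

end


open Metric

section helpers
variable {k : ℕ}

variable {f : (EuclideanSpace ℝ (Fin k)) → ℝ} {C δ : ℝ} {x y : (EuclideanSpace ℝ (Fin k))}

lemma le_fPlus (hbdd : ∀ z, |f z| ≤ C) (hy : y ∈ ball x δ) : f y ≤ fPlus f δ x :=
  le_csSup ⟨C, by rintro _ ⟨z, _, rfl⟩; exact (abs_le.1 (hbdd z)).2⟩ ⟨y, hy, rfl⟩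

lemma fPlus_le (hδ : 0 < δ) {c : ℝ} (h : ∀ y ∈ ball x δ, f y ≤ c) : fPlus f δ x ≤ c :=
  csSup_le ⟨f x, x, mem_ball_self hδ, rfl⟩ (by rintro _ ⟨z, hz, rfl⟩; exact h z hz)

lemma fMinus_le (hbdd : ∀ z, |f z| ≤ C) (hy : y ∈ ball x δ) : fMinus f δ x ≤ f y :=
  csInf_le ⟨-C, by rintro _ ⟨z, _, rfl⟩; exact (abs_le.1 (hbdd z)).1⟩ ⟨y, hy, rfl⟩

lemma le_fMinus (hδ : 0 < δ) {c : ℝ} (h : ∀ y ∈ ball x δ, c ≤ f y) : c ≤ fMinus f δ x :=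
  le_csInf ⟨f x, x, mem_ball_self hδ, rfl⟩ (by rintro _ ⟨z, hz, rfl⟩; exact h z hz)

lemma abs_fPlus_le (hbdd : ∀ z, |f z| ≤ C) (hδ : 0 < δ) (x : (EuclideanSpace ℝ (Fin k))) : |fPlus f δ x| ≤ C :=
  abs_le.2 ⟨le_trans (abs_le.1 (hbdd x)).1 (le_fPlus hbdd (mem_ball_self hδ)),
    fPlus_le hδ fun y _ => (abs_le.1 (hbdd y)).2⟩

lemma abs_fMinus_le (hbdd : ∀ z, |f z| ≤ C) (hδ : 0 < δ) (x : (EuclideanSpace ℝ (Fin k))) : |fMinus f δ x| ≤ C :=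
  abs_le.2 ⟨le_fMinus hδ fun y _ => (abs_le.1 (hbdd y)).1,
    le_trans (fMinus_le hbdd (mem_ball_self hδ)) (abs_le.1 (hbdd x)).2⟩

lemma measurable_fPlus (hbdd : ∀ z, |f z| ≤ C) (hδ : 0 < δ) : Measurable (fPlus f δ) := by
  have h : LowerSemicontinuous (fPlus f δ) := by
    intro x c hc
    obtain ⟨_, ⟨y, hy, rfl⟩, hfy⟩ :=
      exists_lt_of_lt_csSup (s := f '' ball x δ) ⟨f x, x, mem_ball_self hδ, rfl⟩ hc
    have hyx : dist y x < δ := hy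
    filter_upwards [Metric.ball_mem_nhds x (sub_pos.2 hyx)] with x' hx'
    refine lt_of_lt_of_le hfy (le_fPlus hbdd ?_)
    have : dist y x' ≤ dist y x + dist x x' := dist_triangle _ _ _
    have hx'' : dist x x' < δ - dist y x := by rwa [dist_comm]
    exact lt_of_le_of_lt this (by linarith)
  exact h.measurable

lemma measurable_fMinus (hbdd : ∀ z, |f z| ≤ C) (hδ : 0 < δ) : Measurable (fMinus f δ) := by
  have h : UpperSemicontinuous (fMinus f δ) := by
    intro x c hc
    obtain ⟨_, ⟨y, hy, rfl⟩, hfy⟩ :=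
      exists_lt_of_csInf_lt (s := f '' ball x δ) ⟨f x, x, mem_ball_self hδ, rfl⟩ hc
    have hyx : dist y x < δ := hy
    filter_upwards [Metric.ball_mem_nhds x (sub_pos.2 hyx)] with x' hx'
    refine lt_of_le_of_lt (fMinus_le hbdd ?_) hfy
    have : dist y x' ≤ dist y x + dist x x' := dist_triangle _ _ _
    have hx'' : dist x x' < δ - dist y x := by rwa [dist_comm]
    exact lt_of_le_of_lt this (by linarith)
  exact h.measurable

lemma le_omegaFn (hbdd : ∀ z, |f z| ≤ C) (hy : y ∈ ball x δ) :
    |f y - f x| ≤ omegaFn f δ x := by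
  refine le_csSup ⟨2 * C, ?_⟩ ⟨y, hy, rfl⟩
  rintro _ ⟨z, _, rfl⟩
  calc |f z - f x| ≤ |f z| + |f x| := abs_sub _ _
  _ ≤ 2 * C := by have := hbdd z; have := hbdd x; linarith

lemma omegaFn_le (hδ : 0 < δ) {c : ℝ} (h : ∀ y ∈ ball x δ, |f y - f x| ≤ c) :
    omegaFn f δ x ≤ c :=
  csSup_le ⟨|f x - f x|, x, mem_ball_self hδ, rfl⟩ (by rintro _ ⟨z, hz, rfl⟩; exact h z hz)

lemma omegaFn_nonneg (hδ : 0 < δ) (hbdd : ∀ z, |f z| ≤ C) (x : (EuclideanSpace ℝ (Fin k))) : 0 ≤ omegaFn f δ x := by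
  have := le_omegaFn (δ := δ) hbdd (mem_ball_self hδ (x := x))
  simpa using this

lemma abs_omegaFn_le (hδ : 0 < δ) (hbdd : ∀ z, |f z| ≤ C) (x : (EuclideanSpace ℝ (Fin k))) :
    |omegaFn f δ x| ≤ 2 * C := by
  rw [abs_of_nonneg (omegaFn_nonneg hδ hbdd x)]
  refine omegaFn_le hδ fun y _ => ?_
  calc |f y - f x| ≤ |f y| + |f x| := abs_sub _ _
  _ ≤ 2 * C := by have := hbdd y; have := hbdd x; linarith

lemma omegaFn_eq_max (hδ : 0 < δ) (hbdd : ∀ z, |f z| ≤ C) (x : (EuclideanSpace ℝ (Fin k))) :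
    omegaFn f δ x = max (fPlus f δ x - f x) (f x - fMinus f δ x) := by
  apply le_antisymm
  · refine omegaFn_le hδ fun y hy => ?_
    rcases abs_sub_le_iff.1 (le_refl |f y - f x|) with ⟨h1, h2⟩
    refine abs_sub_le_iff.2 ⟨?_, ?_⟩
    · exact le_trans (by linarith [le_fPlus hbdd hy]) (le_max_left _ _)
    · exact le_trans (by linarith [fMinus_le hbdd hy]) (le_max_right _ _)
  · refine max_le ?_ ?_
    · have : fPlus f δ x ≤ f x + omegaFn f δ x := by
        refine fPlus_le hδ fun y hy => ?_
        have := le_omegaFn hbdd hy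
        have := abs_le.1 this
        linarith [(abs_le.1 (le_omegaFn hbdd hy)).2, abs_sub_abs_le_abs_sub (f y) (f x)]
      linarith
    · have : f x - omegaFn f δ x ≤ fMinus f δ x := by
        refine le_fMinus hδ fun y hy => ?_
        have h := (abs_le.1 (le_omegaFn hbdd hy)).1
        linarith
      linarith

lemma measurable_omegaFn (hf : Measurable f) (hbdd : ∀ z, |f z| ≤ C) (hδ : 0 < δ) :
    Measurable (omegaFn f δ) := by
  have : omegaFn f δ = fun x => max (fPlus f δ x - f x) (f x - fMinus f δ x) :=
    funext (omegaFn_eq_max hδ hbdd)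
  rw [this]
  exact Measurable.max ((measurable_fPlus hbdd hδ).sub hf) (hf.sub (measurable_fMinus hbdd hδ))

lemma ball_shift (x y : (EuclideanSpace ℝ (Fin k))) (δ : ℝ) :
    (fun u : (EuclideanSpace ℝ (Fin k)) => u + y) '' Metric.ball x δ = Metric.ball (x + y) δ := by
  ext z
  simp only [Set.mem_image, Metric.mem_ball]
  constructor
  · rintro ⟨u, hu, rfl⟩
    rwa [dist_eq_norm, show u + y - (x + y) = u - x by abel, ← dist_eq_norm]
  · intro hz
    refine ⟨z - y, ?_, by abel⟩
    rwa [dist_eq_norm, show z - y - x = z - (x + y) by abel, ← dist_eq_norm]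

lemma fPlus_shift (f : (EuclideanSpace ℝ (Fin k)) → ℝ) (δ : ℝ) (y : (EuclideanSpace ℝ (Fin k))) :
    fPlus (fun x => f (x + y)) δ = fun x => fPlus f δ (x + y) := by
  funext x
  unfold fPlus
  rw [← ball_shift x y δ, ← Set.image_comp]
  rfl

lemma fMinus_shift (f : (EuclideanSpace ℝ (Fin k)) → ℝ) (δ : ℝ) (y : (EuclideanSpace ℝ (Fin k))) :
    fMinus (fun x => f (x + y)) δ = fun x => fMinus f δ (x + y) := by
  funext x
  unfold fMinus
  rw [← ball_shift x y δ, ← Set.image_comp]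
  rfl

lemma omegaFn_shift (f : (EuclideanSpace ℝ (Fin k)) → ℝ) (δ : ℝ) (y : (EuclideanSpace ℝ (Fin k))) :
    omegaFn (fun x => f (x + y)) δ = fun x => omegaFn f δ (x + y) := by
  funext x
  unfold omegaFn
  rw [← ball_shift x y δ, ← Set.image_comp]
  rfl

lemma fPlus_neg (f : (EuclideanSpace ℝ (Fin k)) → ℝ) (δ : ℝ) :
    fPlus (fun x => -f x) δ = fun x => -fMinus f δ x := by
  funext x
  unfold fPlus fMinus
  rw [Real.sInf_def, neg_neg]
  congr 1
  ext z
  simp only [Set.mem_image, Set.mem_neg]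
  constructor
  · rintro ⟨u, hu, rfl⟩; exact ⟨u, hu, by ring⟩
  · rintro ⟨u, hu, hz⟩; exact ⟨u, hu, by rw [hz, neg_neg]⟩

lemma fMinus_neg (f : (EuclideanSpace ℝ (Fin k)) → ℝ) (δ : ℝ) :
    fMinus (fun x => -f x) δ = fun x => -fPlus f δ x := by
  have := fPlus_neg (fun x => -f x) δ
  simp only [neg_neg] at this
  funext x
  have h := congrFun this x
  have : fPlus f δ = fPlus (fun x => -(-f x)) δ := by simp
  rw [this, fPlus_neg]
  simp

lemma omegaFn_neg (f : (EuclideanSpace ℝ (Fin k)) → ℝ) (δ : ℝ) :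
    omegaFn (fun x => -f x) δ = omegaFn f δ := by
  funext x
  unfold omegaFn
  congr 1
  ext z
  simp only [Set.mem_image]
  constructor
  · rintro ⟨u, hu, rfl⟩; exact ⟨u, hu, by rw [← abs_neg]; ring_nf⟩
  · rintro ⟨u, hu, rfl⟩; exact ⟨u, hu, by rw [← abs_neg]; ring_nf⟩

lemma integrable_of_bdd {m : Measure (EuclideanSpace ℝ (Fin k))} [IsFiniteMeasure m] {h : (EuclideanSpace ℝ (Fin k)) → ℝ} {D : ℝ}
    (hm : Measurable h) (hD : ∀ x, |h x| ≤ D) : Integrable h m :=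
  ⟨hm.aestronglyMeasurable,
    HasFiniteIntegral.of_bounded (C := D) (ae_of_all _ fun x => by
      simpa [Real.norm_eq_abs] using hD x)⟩

lemma abs_integral_le {m : Measure (EuclideanSpace ℝ (Fin k))} [IsProbabilityMeasure m] {h : (EuclideanSpace ℝ (Fin k)) → ℝ} {D : ℝ}
    (hD : ∀ x, |h x| ≤ D) : |∫ x, h x ∂m| ≤ D := by
  have := norm_integral_le_of_norm_le_const (μ := m) (f := h) (C := D)
    (ae_of_all _ fun x => by simpa [Real.norm_eq_abs] using hD x)
  simpa [Real.norm_eq_abs] using this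

end helpers

section mainaux

open Metric

variable {k : ℕ}

lemma abs_integral_le' {A : Type*} [MeasurableSpace A] {m : Measure A}
    [IsProbabilityMeasure m] {h : A → ℝ} {D : ℝ}
    (hD : ∀ x, |h x| ≤ D) : |∫ x, h x ∂m| ≤ D := by
  have := norm_integral_le_of_norm_le_const (μ := m) (f := h) (C := D)
    (ae_of_all _ fun x => by simpa [Real.norm_eq_abs] using hD x)
  simpa [Real.norm_eq_abs] using this

lemma integrable_of_bdd' {A : Type*} [MeasurableSpace A] {m : Measure A}
    [IsFiniteMeasure m] {h : A → ℝ} {D : ℝ}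
    (hm : Measurable h) (hD : ∀ x, |h x| ≤ D) : Integrable h m :=
  ⟨hm.aestronglyMeasurable,
    HasFiniteIntegral.of_bounded (C := D) (ae_of_all _ fun x => by
      simpa [Real.norm_eq_abs] using hD x)⟩

lemma aux_smoothing (μ ν K : Measure (EuclideanSpace ℝ (Fin k)))
    [IsProbabilityMeasure μ] [IsProbabilityMeasure ν] [IsProbabilityMeasure K]
    (ε α : ℝ) (hε : 0 < ε) (hα : 1 / 2 < α)
    (hK : K (Metric.ball 0 ε) = ENNReal.ofReal α)
    (f : EuclideanSpace ℝ (Fin k) → ℝ) (hf : Measurable f)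
    (C : ℝ) (hbdd : ∀ x, |f x| ≤ C) (y₀ : EuclideanSpace ℝ (Fin k)) :
    α * ((∫ x, f (x + y₀) ∂μ) - ∫ x, f (x + y₀) ∂ν)
      ≤ gammaStar f ε μ ν K + omegaStar f (2 * ε) ν
        + (1 - α) * (⨆ y, |(∫ x, f (x + y) ∂μ) - ∫ x, f (x + y) ∂ν|) := by
  have hα0 : (0:ℝ) < α := by linarith
  have hα1 : α ≤ 1 := by
    have h1 : ENNReal.ofReal α ≤ 1 := by
      rw [← hK, ← measure_univ (μ := K)]
      exact measure_mono (Set.subset_univ _)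
    exact ENNReal.ofReal_le_one.1 h1
  have hC0 : (0:ℝ) ≤ C := le_trans (abs_nonneg _) (hbdd 0)
  have h2ε : 0 < 2 * ε := by linarith
  have hFmeas : Measurable (fPlus f ε) := measurable_fPlus hbdd hε
  have hFb : ∀ x, |fPlus f ε x| ≤ C := abs_fPlus_le hbdd hε
  have hGb : ∀ x, |fMinus f ε x| ≤ C := abs_fMinus_le hbdd hε
  have hωmeas : Measurable (omegaFn f (2*ε)) := measurable_omegaFn hf hbdd h2ε
  have hωb : ∀ x, |omegaFn f (2*ε) x| ≤ 2*C := abs_omegaFn_le h2ε hbdd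
  -- notation
  set τ : EuclideanSpace ℝ (Fin k) → ℝ :=
    fun w => (∫ x, f (x + w) ∂μ) - ∫ x, f (x + w) ∂ν with hτdef
  have hτbd : ∀ w, |τ w| ≤ 2 * C := by
    intro w
    have h1 : |∫ x, f (x + w) ∂μ| ≤ C := abs_integral_le' (fun x => hbdd _)
    have h2 : |∫ x, f (x + w) ∂ν| ≤ C := abs_integral_le' (fun x => hbdd _)
    calc |τ w| ≤ |∫ x, f (x + w) ∂μ| + |∫ x, f (x + w) ∂ν| := abs_sub _ _
    _ ≤ 2 * C := by linarith
  set T : ℝ := ⨆ y, |τ y| with hTdef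
  have hTbdd : BddAbove (Set.range fun y => |τ y|) :=
    ⟨2*C, by rintro _ ⟨y, rfl⟩; exact hτbd y⟩
  have hτT : ∀ w, |τ w| ≤ T := fun w => le_ciSup hTbdd w
  set Ω : ℝ := omegaStar f (2*ε) ν with hΩdef
  have hΩ : ∀ w, (∫ x, omegaFn f (2*ε) (x + w) ∂ν) ≤ Ω := by
    intro w
    have heq : ∀ y, omegaInt (fun x => f (x + y)) (2*ε) ν
        = ∫ x, omegaFn f (2*ε) (x + y) ∂ν := by
      intro y; unfold omegaInt; rw [omegaFn_shift]
    have hb : ∀ y : EuclideanSpace ℝ (Fin k),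
        omegaInt (fun x => f (x + y)) (2*ε) ν ≤ 2*C := by
      intro y
      rw [heq y]
      exact le_trans (le_abs_self _) (abs_integral_le' (fun x => hωb _))
    rw [← heq w]
    exact le_ciSup (f := fun y => omegaInt (fun x => f (x + y)) (2*ε) ν)
      ⟨2*C, by rintro _ ⟨y, rfl⟩; exact hb y⟩ w
  -- gamma bound
  have hγ : gammaFn (fun x => f (x + y₀)) ε μ ν K ≤ gammaStar f ε μ ν K := by
    refine le_ciSup (f := fun y => gammaFn (fun x => f (x + y)) ε μ ν K) ⟨2*C, ?_⟩ y₀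
    rintro _ ⟨y, rfl⟩
    have hp : ∀ x, |fPlus (fun x => f (x + y)) ε x| ≤ C := by
      intro x; rw [fPlus_shift]; exact hFb _
    have hm : ∀ x, |fMinus (fun x => f (x + y)) ε x| ≤ C := by
      intro x; rw [fMinus_shift]; exact hGb _
    have hcp : ∀ (g : EuclideanSpace ℝ (Fin k) → ℝ) (m : Measure (EuclideanSpace ℝ (Fin k)))
        [IsProbabilityMeasure m], (∀ x, |g x| ≤ C) → |convInt g m K| ≤ C := by
      intro g m _ hg
      exact abs_integral_le' (fun p => hg _)
    unfold gammaFn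
    refine max_le ?_ ?_
    · calc |convInt (fPlus (fun x => f (x + y)) ε) μ K - convInt (fPlus (fun x => f (x + y)) ε) ν K|
          ≤ |convInt (fPlus (fun x => f (x + y)) ε) μ K| + |convInt (fPlus (fun x => f (x + y)) ε) ν K| := abs_sub _ _
      _ ≤ 2 * C := by
          have := hcp _ μ hp; have := hcp _ ν hp; linarith
    · calc |convInt (fMinus (fun x => f (x + y)) ε) μ K - convInt (fMinus (fun x => f (x + y)) ε) ν K|
          ≤ |convInt (fMinus (fun x => f (x + y)) ε) μ K| + |convInt (fMinus (fun x => f (x + y)) ε) ν K| := abs_sub _ _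
      _ ≤ 2 * C := by
          have := hcp _ μ hm; have := hcp _ ν hm; linarith
  -- the inner integrals
  set Iμ : EuclideanSpace ℝ (Fin k) → ℝ := fun z => ∫ x, fPlus f ε (x + z + y₀) ∂μ with hIμdef
  set Iν : EuclideanSpace ℝ (Fin k) → ℝ := fun z => ∫ x, fPlus f ε (x + z + y₀) ∂ν with hIνdef
  have hFadd : Measurable fun p : (EuclideanSpace ℝ (Fin k)) × (EuclideanSpace ℝ (Fin k)) =>
      fPlus f ε (p.1 + p.2 + y₀) :=
    hFmeas.comp ((measurable_fst.add measurable_snd).add_const y₀)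
  have hconvμ : convInt (fPlus (fun x => f (x + y₀)) ε) μ K = ∫ z, Iμ z ∂K := by
    have h0 : convInt (fPlus (fun x => f (x + y₀)) ε) μ K
        = ∫ p : (EuclideanSpace ℝ (Fin k)) × (EuclideanSpace ℝ (Fin k)),
            fPlus f ε (p.1 + p.2 + y₀) ∂(μ.prod K) := by
      rw [fPlus_shift]; rfl
    rw [h0, integral_prod_symm (fun p => fPlus f ε (p.1 + p.2 + y₀))
      (integrable_of_bdd' hFadd (fun p => hFb _))]
    try simp only [hIμdef]
  have hconvν : convInt (fPlus (fun x => f (x + y₀)) ε) ν K = ∫ z, Iν z ∂K := by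
    have h0 : convInt (fPlus (fun x => f (x + y₀)) ε) ν K
        = ∫ p : (EuclideanSpace ℝ (Fin k)) × (EuclideanSpace ℝ (Fin k)),
            fPlus f ε (p.1 + p.2 + y₀) ∂(ν.prod K) := by
      rw [fPlus_shift]; rfl
    rw [h0, integral_prod_symm (fun p => fPlus f ε (p.1 + p.2 + y₀))
      (integrable_of_bdd' hFadd (fun p => hFb _))]
    try simp only [hIνdef]
  have huncurry : Measurable
      (Function.uncurry fun z x : EuclideanSpace ℝ (Fin k) => fPlus f ε (x + z + y₀)) :=
    hFmeas.comp ((measurable_snd.add measurable_fst).add_const y₀)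
  have hIμm : Measurable Iμ := by
    simp only [hIμdef]
    exact (huncurry.stronglyMeasurable.integral_prod_right (ν := μ)).measurable
  have hIνm : Measurable Iν := by
    simp only [hIνdef]
    exact (huncurry.stronglyMeasurable.integral_prod_right (ν := ν)).measurable
  have hIμb : ∀ z, |Iμ z| ≤ C := fun z => by
    simp only [hIμdef]; exact abs_integral_le' (fun x => hFb _)
  have hIνb : ∀ z, |Iν z| ≤ C := fun z => by
    simp only [hIνdef]; exact abs_integral_le' (fun x => hFb _)
  have hIμint : Integrable Iμ K := integrable_of_bdd' hIμm hIμb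
  have hIνint : Integrable Iν K := integrable_of_bdd' hIνm hIνb
  have hIint : Integrable (fun z => Iμ z - Iν z) K := hIμint.sub hIνint
  -- integrability of shifted functions
  have hfint : ∀ (w : EuclideanSpace ℝ (Fin k)) (m : Measure (EuclideanSpace ℝ (Fin k)))
      [IsProbabilityMeasure m], Integrable (fun x => f (x + w)) m := by
    intro w m _
    exact integrable_of_bdd' (hf.comp (measurable_add_const w)) (fun x => hbdd _)
  have hFint : ∀ (z : EuclideanSpace ℝ (Fin k)) (m : Measure (EuclideanSpace ℝ (Fin k)))
      [IsProbabilityMeasure m], Integrable (fun x => fPlus f ε (x + z + y₀)) m := by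
    intro z m _
    exact integrable_of_bdd' (hFmeas.comp ((measurable_add_const z).add_const y₀))
      (fun x => hFb _)
  have hωint : ∀ (w : EuclideanSpace ℝ (Fin k)),
      Integrable (fun x => omegaFn f (2*ε) (x + w)) ν :=
    fun w => integrable_of_bdd' (hωmeas.comp (measurable_add_const w)) (fun x => hωb _)
  -- pointwise lower bound valid for all z
  have hlow : ∀ z, τ (z + y₀) - Ω ≤ Iμ z - Iν z := by
    intro z
    have e1 : ∀ x : EuclideanSpace ℝ (Fin k), f (x + (z + y₀)) ≤ fPlus f ε (x + z + y₀) := by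
      intro x
      have hxz : x + (z + y₀) = x + z + y₀ := (add_assoc x z y₀).symm
      rw [hxz]
      exact le_fPlus hbdd (mem_ball_self hε)
    have e2 : ∀ x : EuclideanSpace ℝ (Fin k),
        fPlus f ε (x + z + y₀) ≤ f (x + (z + y₀)) + omegaFn f (2*ε) (x + (z + y₀)) := by
      intro x
      have hxz : x + (z + y₀) = x + z + y₀ := (add_assoc x z y₀).symm
      rw [hxz]
      refine fPlus_le hε fun y hy => ?_
      have hy2 : y ∈ ball (x + z + y₀) (2*ε) :=
        ball_subset_ball (by linarith : ε ≤ 2*ε) hy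
      have h3 := (abs_le.1 (le_omegaFn hbdd hy2)).2
      linarith
    have i1 : ∫ x, f (x + (z + y₀)) ∂μ ≤ Iμ z := by
      simp only [hIμdef]
      exact integral_mono (hfint (z + y₀) μ) (hFint z μ) e1
    have i2 : Iν z ≤ (∫ x, f (x + (z + y₀)) ∂ν) + ∫ x, omegaFn f (2*ε) (x + (z + y₀)) ∂ν := by
      simp only [hIνdef]
      have hsum : Integrable
          (fun x => f (x + (z + y₀)) + omegaFn f (2*ε) (x + (z + y₀))) ν :=
        (hfint (z + y₀) ν).add (hωint (z + y₀))
      have h4 := integral_mono (hFint z ν) hsum e2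
      rwa [integral_add (hfint (z + y₀) ν) (hωint (z + y₀))] at h4
    have h5 := hΩ (z + y₀)
    simp only [hτdef]
    linarith
  -- pointwise lower bound on the ball
  have hball : ∀ z ∈ ball (0 : EuclideanSpace ℝ (Fin k)) ε, τ y₀ - Ω ≤ Iμ z - Iν z := by
    intro z hz
    have hzn : ‖z‖ < ε := by simpa using mem_ball_zero_iff.1 hz
    have e1 : ∀ x : EuclideanSpace ℝ (Fin k), f (x + y₀) ≤ fPlus f ε (x + z + y₀) := by
      intro x
      refine le_fPlus hbdd ?_
      have h1 : (x + y₀) - (x + z + y₀) = -z := by abel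
      rw [Metric.mem_ball, dist_eq_norm, h1, norm_neg]
      exact hzn
    have e2 : ∀ x : EuclideanSpace ℝ (Fin k),
        fPlus f ε (x + z + y₀) ≤ f (x + y₀) + omegaFn f (2*ε) (x + y₀) := by
      intro x
      refine fPlus_le hε fun y hy => ?_
      have hy2 : y ∈ ball (x + y₀) (2*ε) := by
        refine Metric.ball_subset_ball' ?_ hy
        have h1 : dist (x + z + y₀) (x + y₀) = ‖z‖ := by
          rw [dist_eq_norm]; congr 1; abel
        rw [h1]; linarith
      have h3 := (abs_le.1 (le_omegaFn hbdd hy2)).2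
      linarith
    have i1 : ∫ x, f (x + y₀) ∂μ ≤ Iμ z := by
      simp only [hIμdef]
      exact integral_mono (hfint y₀ μ) (hFint z μ) e1
    have i2 : Iν z ≤ (∫ x, f (x + y₀) ∂ν) + ∫ x, omegaFn f (2*ε) (x + y₀) ∂ν := by
      simp only [hIνdef]
      have hsum : Integrable
          (fun x => f (x + y₀) + omegaFn f (2*ε) (x + y₀)) ν :=
        (hfint y₀ ν).add (hωint y₀)
      have h4 := integral_mono (hFint z ν) hsum e2
      rwa [integral_add (hfint y₀ ν) (hωint y₀)] at h4
    have h5 := hΩ y₀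
    simp only [hτdef]
    linarith
  -- split the integral
  have hsplit : (∫ z in ball (0 : EuclideanSpace ℝ (Fin k)) ε, (Iμ z - Iν z) ∂K)
      + ∫ z in (ball (0 : EuclideanSpace ℝ (Fin k)) ε)ᶜ, (Iμ z - Iν z) ∂K
      = ∫ z, (Iμ z - Iν z) ∂K :=
    integral_add_compl measurableSet_ball hIint
  have h1 : (τ y₀ - Ω) * α ≤ ∫ z in ball (0 : EuclideanSpace ℝ (Fin k)) ε, (Iμ z - Iν z) ∂K := by
    have := setIntegral_ge_of_const_le_real measurableSet_ball
      (by rw [hK]; exact ENNReal.ofReal_ne_top) hball hIint.integrableOn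
    rwa [measureReal_def, hK, ENNReal.toReal_ofReal hα0.le] at this
  have hKc : K (ball (0 : EuclideanSpace ℝ (Fin k)) ε)ᶜ = 1 - ENNReal.ofReal α := by
    rw [measure_compl measurableSet_ball (measure_ne_top K _), hK, measure_univ]
  have hαle1 : ENNReal.ofReal α ≤ 1 := by
    rw [← hK, ← measure_univ (μ := K)]; exact measure_mono (Set.subset_univ _)
  have h2 : (-T - Ω) * (1 - α)
      ≤ ∫ z in (ball (0 : EuclideanSpace ℝ (Fin k)) ε)ᶜ, (Iμ z - Iν z) ∂K := by
    have hlow' : ∀ z ∈ (ball (0 : EuclideanSpace ℝ (Fin k)) ε)ᶜ, -T - Ω ≤ Iμ z - Iν z := by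
      intro z _
      have h3 := (abs_le.1 (hτT (z + y₀))).1
      have h4 := hlow z
      linarith
    have := setIntegral_ge_of_const_le_real measurableSet_ball.compl
      (by rw [hKc]; exact (ENNReal.sub_ne_top ENNReal.one_ne_top)) hlow' hIint.integrableOn
    rwa [measureReal_def, hKc, ENNReal.toReal_sub_of_le hαle1 ENNReal.one_ne_top, ENNReal.toReal_one,
      ENNReal.toReal_ofReal hα0.le] at this
  have hIsum : ∫ z, (Iμ z - Iν z) ∂K = (∫ z, Iμ z ∂K) - ∫ z, Iν z ∂K :=
    integral_sub hIμint hIνint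
  have hle : ∫ z, (Iμ z - Iν z) ∂K ≤ gammaStar f ε μ ν K := by
    calc ∫ z, (Iμ z - Iν z) ∂K
        = convInt (fPlus (fun x => f (x + y₀)) ε) μ K
          - convInt (fPlus (fun x => f (x + y₀)) ε) ν K := by rw [hconvμ, hconvν, hIsum]
    _ ≤ |convInt (fPlus (fun x => f (x + y₀)) ε) μ K
          - convInt (fPlus (fun x => f (x + y₀)) ε) ν K| := le_abs_self _
    _ ≤ gammaFn (fun x => f (x + y₀)) ε μ ν K := le_max_left _ _
    _ ≤ gammaStar f ε μ ν K := hγ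
  have hexpand : (τ y₀ - Ω) * α + (-T - Ω) * (1 - α)
      = α * τ y₀ - Ω - (1 - α) * T := by ring
  have hfinal : (τ y₀ - Ω) * α + (-T - Ω) * (1 - α) ≤ gammaStar f ε μ ν K := by
    calc (τ y₀ - Ω) * α + (-T - Ω) * (1 - α)
        ≤ (∫ z in ball (0 : EuclideanSpace ℝ (Fin k)) ε, (Iμ z - Iν z) ∂K)
          + ∫ z in (ball (0 : EuclideanSpace ℝ (Fin k)) ε)ᶜ, (Iμ z - Iν z) ∂K := by
          linarith
    _ = ∫ z, (Iμ z - Iν z) ∂K := hsplit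
    _ ≤ gammaStar f ε μ ν K := hle
  rw [hexpand] at hfinal
  simp only [hTdef, hΩdef, hτdef] at hfinal ⊢
  linarith

end mainaux


section negs
open Metric
variable {k : ℕ}

lemma convInt_neg (g : EuclideanSpace ℝ (Fin k) → ℝ)
    (m K : Measure (EuclideanSpace ℝ (Fin k))) :
    convInt (fun x => -g x) m K = -convInt g m K := by
  unfold convInt
  exact integral_neg _

lemma gammaFn_neg (g : EuclideanSpace ℝ (Fin k) → ℝ) (ε : ℝ)
    (μ ν K : Measure (EuclideanSpace ℝ (Fin k))) :
    gammaFn (fun x => -g x) ε μ ν K = gammaFn g ε μ ν K := by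
  unfold gammaFn
  rw [fPlus_neg, fMinus_neg, convInt_neg, convInt_neg, convInt_neg, convInt_neg]
  have h1 : ∀ a b : ℝ, |-a - -b| = |a - b| := fun a b => by
    rw [neg_sub_neg, abs_sub_comm]
  rw [h1, h1, max_comm]

lemma gammaStar_neg (f : EuclideanSpace ℝ (Fin k) → ℝ) (ε : ℝ)
    (μ ν K : Measure (EuclideanSpace ℝ (Fin k))) :
    gammaStar (fun x => -f x) ε μ ν K = gammaStar f ε μ ν K := by
  unfold gammaStar
  exact iSup_congr fun y => gammaFn_neg (fun x => f (x + y)) ε μ ν K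

lemma omegaInt_neg (g : EuclideanSpace ℝ (Fin k) → ℝ) (δ : ℝ)
    (ν : Measure (EuclideanSpace ℝ (Fin k))) :
    omegaInt (fun x => -g x) δ ν = omegaInt g δ ν := by
  unfold omegaInt
  rw [omegaFn_neg]

lemma omegaStar_neg (f : EuclideanSpace ℝ (Fin k) → ℝ) (δ : ℝ)
    (ν : Measure (EuclideanSpace ℝ (Fin k))) :
    omegaStar (fun x => -f x) δ ν = omegaStar f δ ν := by
  unfold omegaStar
  exact iSup_congr fun y => omegaInt_neg (fun x => f (x + y)) δ ν

end negs

/-- Smoothing inequality. -/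
theorem smoothing_inequality {k : ℕ}
    (μ ν K : Measure (EuclideanSpace ℝ (Fin k)))
    [IsProbabilityMeasure μ] [IsProbabilityMeasure ν] [IsProbabilityMeasure K]
    (ε α : ℝ) (hε : 0 < ε) (hα : 1 / 2 < α)
    (hK : K (Metric.ball 0 ε) = ENNReal.ofReal α)
    (f : EuclideanSpace ℝ (Fin k) → ℝ) (hf : Measurable f)
    (C : ℝ) (hbdd : ∀ x, |f x| ≤ C)
    (hfp : Measurable (fPlus f ε)) (hfm : Measurable (fMinus f ε)) :
    |∫ x, f x ∂μ - ∫ x, f x ∂ν|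
      ≤ (2 * α - 1)⁻¹ * (gammaStar f ε μ ν K + omegaStar f (2 * ε) ν) := by
  have hα0 : (0:ℝ) < α := by linarith
  have h2α : (0:ℝ) < 2 * α - 1 := by linarith
  have hC0 : (0:ℝ) ≤ C := le_trans (abs_nonneg _) (hbdd 0)
  have hbdd' : ∀ x : EuclideanSpace ℝ (Fin k), |(fun x => -f x) x| ≤ C := fun x => by
    simpa using hbdd x
  have key1 := aux_smoothing μ ν K ε α hε hα hK f hf C hbdd
  have key2 := aux_smoothing μ ν K ε α hε hα hK (fun x => -f x) hf.neg C hbdd'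
  simp only [gammaStar_neg, omegaStar_neg, integral_neg, neg_sub_neg] at key2
  have hTeq' : (⨆ y : EuclideanSpace ℝ (Fin k),
        |(∫ x, f (x + y) ∂ν) - ∫ x, f (x + y) ∂μ|)
      = ⨆ y : EuclideanSpace ℝ (Fin k),
        |(∫ x, f (x + y) ∂μ) - ∫ x, f (x + y) ∂ν| :=
    iSup_congr fun y => abs_sub_comm _ _
  rw [hTeq'] at key2
  have hTbdd : BddAbove (Set.range fun y : EuclideanSpace ℝ (Fin k) =>
      |(∫ x, f (x + y) ∂μ) - ∫ x, f (x + y) ∂ν|) := by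
    refine ⟨2*C, ?_⟩
    rintro _ ⟨y, rfl⟩
    have h1 : |∫ x, f (x + y) ∂μ| ≤ C := abs_integral_le' (fun x => hbdd _)
    have h2 : |∫ x, f (x + y) ∂ν| ≤ C := abs_integral_le' (fun x => hbdd _)
    calc |(∫ x, f (x + y) ∂μ) - ∫ x, f (x + y) ∂ν|
        ≤ |∫ x, f (x + y) ∂μ| + |∫ x, f (x + y) ∂ν| := abs_sub _ _
    _ ≤ 2*C := by linarith
  have hkey : ∀ y : EuclideanSpace ℝ (Fin k),
      |(∫ x, f (x + y) ∂μ) - ∫ x, f (x + y) ∂ν|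
      ≤ (gammaStar f ε μ ν K + omegaStar f (2 * ε) ν
          + (1 - α) * (⨆ y : EuclideanSpace ℝ (Fin k),
              |(∫ x, f (x + y) ∂μ) - ∫ x, f (x + y) ∂ν|)) / α := by
    intro y
    rw [le_div_iff₀ hα0]
    rcases abs_cases ((∫ x, f (x + y) ∂μ) - ∫ x, f (x + y) ∂ν) with ⟨h, _⟩ | ⟨h, _⟩
    · rw [h]; linarith [key1 y]
    · rw [h]; linarith [key2 y]
  have hsup := ciSup_le hkey
  rw [le_div_iff₀ hα0] at hsup
  have hδ : |∫ x, f x ∂μ - ∫ x, f x ∂ν|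
      ≤ ⨆ y : EuclideanSpace ℝ (Fin k),
        |(∫ x, f (x + y) ∂μ) - ∫ x, f (x + y) ∂ν| := by
    have h0 := le_ciSup hTbdd (0 : EuclideanSpace ℝ (Fin k))
    simpa using h0
  have hfin : (⨆ y : EuclideanSpace ℝ (Fin k),
        |(∫ x, f (x + y) ∂μ) - ∫ x, f (x + y) ∂ν|)
      ≤ (2 * α - 1)⁻¹ * (gammaStar f ε μ ν K + omegaStar f (2 * ε) ν) := by
    rw [inv_mul_eq_div, le_div_iff₀ h2α]
    linarith
  linarith
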